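/- Let 1 ≤ p < q < ∞ and d ≥ 1. Define f(x) = |x|^{-d/q} on ℝ^d \ {0}. Then the Morrey norm ‖f‖_{M^p_q} = sup_{a ∈ ℝ^d, R > 0} |B(a,R)|^{1/q−1/p} (∫_{B(a,R)} |f|^p)^{1/p} is finite and equals (C_d/d)^{1/q}(1 − p/q)^{−1/p}, where C_d is the surface measure of the unit sphere in ℝ^d. -/

import Mathlib

open MeasureTheory Metric ENNReal

/-- The small Morrey norm: sup over centers `a` and radii `R ∈ (0,1)` of
`|B(a,R)|^(1/q-1/p) (∫_{B(a,R)} |f|^p)^(1/p)`, valued in `ℝ≥0∞`. -/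
noncomputable def smallMorreyNorm (d : ℕ) (p q : ℝ)
    (f : EuclideanSpace ℝ (Fin d) → ℝ) : ℝ≥0∞ :=
  ⨆ (a : EuclideanSpace ℝ (Fin d)) (R : ℝ) (_ : 0 < R) (_ : R < 1),
    volume (ball a R) ^ (1 / q - 1 / p) *
      (∫⁻ y in ball a R, ENNReal.ofReal (|f y| ^ p)) ^ (1 / p)

/-- The (classical) Morrey norm: sup over all centers `a` and radii `R > 0`. -/
noncomputable def morreyNorm (d : ℕ) (p q : ℝ)
    (f : EuclideanSpace ℝ (Fin d) → ℝ) : ℝ≥0∞ :=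
  ⨆ (a : EuclideanSpace ℝ (Fin d)) (R : ℝ) (_ : 0 < R),
    volume (ball a R) ^ (1 / q - 1 / p) *
      (∫⁻ y in ball a R, ENNReal.ofReal (|f y| ^ p)) ^ (1 / p)

section Aux

open Set Real

/-- Measurability of the integrand. -/
lemma measurable_aux (d : ℕ) (c : ℝ) :
    Measurable fun y : EuclideanSpace ℝ (Fin d) => ‖y‖ ^ c :=
  measurable_norm.pow measurable_const

/-- The integral of `‖y‖^{-α}` over the centered ball, computed by the layer cake formula. -/
lemma lintegral_ball_rpow (d : ℕ) (hd : 1 ≤ d) {α R : ℝ} (hα : 0 < α) (hαd : α < d)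
    (hR : 0 < R) :
    ∫⁻ y in ball (0 : EuclideanSpace ℝ (Fin d)) R, ENNReal.ofReal (‖y‖ ^ (-α)) =
      volume (ball (0 : EuclideanSpace ℝ (Fin d)) 1) *
        ENNReal.ofReal (R ^ ((d : ℝ) - α) * (((d : ℝ) / α) / ((d : ℝ) / α - 1))) := by
  set E := EuclideanSpace ℝ (Fin d)
  haveI : Nontrivial E :=
    Module.nontrivial_of_finrank_pos (R := ℝ)
      (by rw [finrank_euclideanSpace_fin]; exact hd)
  have hfr : Module.finrank ℝ E = d := finrank_euclideanSpace_fin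
  have hαne : -α ≠ 0 := neg_ne_zero.2 hα.ne'
  have hαneg : -α < 0 := neg_neg_of_pos hα
  have hmeas : Measurable fun y : E => ‖y‖ ^ (-α) := measurable_aux d (-α)
  have key := lintegral_eq_lintegral_meas_lt (volume.restrict (ball (0 : E) R))
    (f := fun y : E => ‖y‖ ^ (-α))
    (Filter.Eventually.of_forall fun y => Real.rpow_nonneg (norm_nonneg y) _)
    hmeas.aemeasurable
  rw [key]
  have hset : ∀ t ∈ Ioi (0 : ℝ),
      (volume.restrict (ball (0 : E) R)) {y : E | t < ‖y‖ ^ (-α)} =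
        ENNReal.ofReal (min R (t ^ (-α)⁻¹) ^ d) * volume (ball (0 : E) 1) := by
    intro t ht
    have ht : (0 : ℝ) < t := ht
    rw [Measure.restrict_apply (measurableSet_lt measurable_const hmeas)]
    have hEq : {y : E | t < ‖y‖ ^ (-α)} ∩ ball 0 R = ball (0 : E) (min R (t ^ (-α)⁻¹)) \ {0} := by
      ext y
      simp only [mem_inter_iff, mem_setOf_eq, mem_ball, dist_zero_right, mem_diff,
        mem_singleton_iff, lt_min_iff]
      constructor
      · rintro ⟨h1, h2⟩
        have hy0 : y ≠ 0 := by
          rintro rfl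
          rw [norm_zero, Real.zero_rpow hαne] at h1
          linarith
        have hy : 0 < ‖y‖ := norm_pos_iff.2 hy0
        exact ⟨⟨h2, (Real.lt_rpow_inv_iff_of_neg hy ht hαneg).2 h1⟩, hy0⟩
      · rintro ⟨⟨h1, h2⟩, hy0⟩
        have hy : 0 < ‖y‖ := norm_pos_iff.2 hy0
        exact ⟨(Real.lt_rpow_inv_iff_of_neg hy ht hαneg).1 h2, h1⟩
    rw [hEq, measure_diff_null (measure_singleton _),
      Measure.addHaar_ball volume (0 : E)
        (le_min hR.le (Real.rpow_nonneg ht.le _)), hfr]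
  rw [setLIntegral_congr_fun measurableSet_Ioi hset]
  have hmeas2 : Measurable fun t : ℝ => ENNReal.ofReal (min R (t ^ (-α)⁻¹) ^ d) :=
    ((measurable_const.min ((measurable_id.pow measurable_const))).pow
      measurable_const).ennreal_ofReal
  rw [lintegral_mul_const _ hmeas2]
  have ht0 : (0 : ℝ) < R ^ (-α) := Real.rpow_pos_of_pos hR _
  have hsplit : Ioi (0 : ℝ) = Ioc 0 (R ^ (-α)) ∪ Ioi (R ^ (-α)) :=
    (Ioc_union_Ioi_eq_Ioi ht0.le).symm
  rw [hsplit, lintegral_union measurableSet_Ioi (Ioc_disjoint_Ioi le_rfl)]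
  -- first piece
  have h1 : ∫⁻ t in Ioc (0 : ℝ) (R ^ (-α)), ENNReal.ofReal (min R (t ^ (-α)⁻¹) ^ d) =
      ENNReal.ofReal (R ^ d * R ^ (-α)) := by
    rw [setLIntegral_congr_fun measurableSet_Ioc
      (fun t (htt : t ∈ Ioc (0:ℝ) (R ^ (-α))) => by
        have hmin : min R (t ^ (-α)⁻¹) = R := min_eq_left
          ((Real.le_rpow_inv_iff_of_neg hR htt.1 hαneg).2 htt.2)
        rw [hmin])]
    rw [setLIntegral_const, Real.volume_Ioc, ENNReal.ofReal_mul (by positivity)]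
    rw [sub_zero]
  -- second piece
  have h2 : ∫⁻ t in Ioi (R ^ (-α)), ENNReal.ofReal (min R (t ^ (-α)⁻¹) ^ d) =
      ENNReal.ofReal (-((R ^ (-α)) ^ (-((d : ℝ) / α) + 1)) / (-((d : ℝ) / α) + 1)) := by
    have hcongr : ∀ t ∈ Ioi (R ^ (-α)),
        ENNReal.ofReal (min R (t ^ (-α)⁻¹) ^ d) = ENNReal.ofReal (t ^ (-((d : ℝ) / α))) := by
      intro t htt
      have htpos : 0 < t := ht0.trans htt
      have hmin : min R (t ^ (-α)⁻¹) = t ^ (-α)⁻¹ := min_eq_right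
        ((Real.rpow_inv_le_iff_of_neg htpos hR hαneg).2 (le_of_lt htt))
      rw [hmin, ← Real.rpow_natCast (t ^ (-α)⁻¹) d, ← Real.rpow_mul htpos.le]
      congr 1
      field_simp
    rw [setLIntegral_congr_fun measurableSet_Ioi hcongr]
    have hlt : -((d : ℝ) / α) < -1 := by
      rw [neg_lt_neg_iff]
      exact (one_lt_div hα).2 hαd
    have hint := integrableOn_Ioi_rpow_of_lt hlt ht0
    rw [← ofReal_integral_eq_lintegral_ofReal hint
      ((ae_restrict_iff' measurableSet_Ioi).2 (Filter.Eventually.of_forall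
        fun t htt => Real.rpow_nonneg (le_of_lt (ht0.trans htt)) _))]
    rw [integral_Ioi_rpow_of_lt hlt ht0]
  have hs1 : 1 < (d : ℝ) / α := (one_lt_div hα).2 hαd
  have hnn2 : (0:ℝ) ≤ -((R ^ (-α)) ^ (-((d : ℝ) / α) + 1)) / (-((d : ℝ) / α) + 1) := by
    apply div_nonneg_of_nonpos _ (by linarith)
    have : (0:ℝ) < (R ^ (-α)) ^ (-((d : ℝ) / α) + 1) := Real.rpow_pos_of_pos ht0 _
    linarith
  rw [h1, h2, ← ENNReal.ofReal_add (by positivity) hnn2, mul_comm]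
  congr 1
  -- real computation
  have hne : -((d : ℝ) / α) + 1 ≠ 0 := by intro h; nlinarith
  have hne2 : (d:ℝ)/α - 1 ≠ 0 := sub_ne_zero.2 hs1.ne'
  have hab : (R ^ (-α)) ^ (-((d : ℝ) / α) + 1) = R ^ ((d:ℝ) - α) := by
    rw [← Real.rpow_mul hR.le]
    congr 1
    field_simp
    ring
  rw [hab, ← Real.rpow_natCast R d, ← Real.rpow_add hR]
  have hsum : (d : ℝ) + -α = (d : ℝ) - α := by ring
  rw [hsum, show (-((d:ℝ)/α) + 1) = -((d:ℝ)/α - 1) by ring, div_neg, neg_div, neg_neg]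
  field_simp
  congr 1
  have hda : (d:ℝ) - α ≠ 0 := sub_ne_zero.2 (ne_of_gt hαd)
  field_simp
  ring
end Aux

section Comp

open Set Real

/-- Comparison: the integral over an off-center ball is at most the integral over the
centered ball of the same radius. -/
lemma lintegral_ball_le (d : ℕ) (hd : 1 ≤ d) {β R : ℝ} (hβ : 0 < β) (hR : 0 < R)
    (a : EuclideanSpace ℝ (Fin d)) :
    ∫⁻ y in ball a R, ENNReal.ofReal (‖y‖ ^ (-β)) ≤
      ∫⁻ y in ball (0 : EuclideanSpace ℝ (Fin d)) R, ENNReal.ofReal (‖y‖ ^ (-β)) := by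
  haveI : Nontrivial (EuclideanSpace ℝ (Fin d)) :=
    Module.nontrivial_of_finrank_pos (R := ℝ)
      (by rw [finrank_euclideanSpace_fin]; exact hd)
  set g : EuclideanSpace ℝ (Fin d) → ℝ≥0∞ := fun y => ENNReal.ofReal (‖y‖ ^ (-β)) with hg
  set s : Set (EuclideanSpace ℝ (Fin d)) := ball a R with hs_def
  set t : Set (EuclideanSpace ℝ (Fin d)) := ball (0 : EuclideanSpace ℝ (Fin d)) R with ht_def
  have hs : MeasurableSet s := measurableSet_ball
  have ht : MeasurableSet t := measurableSet_ball
  have hgm : Measurable g := (measurable_aux d (-β)).ennreal_ofReal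
  have hvol : volume s = volume t := Measure.addHaar_ball_center volume a R
  have hfin : volume (s ∩ t) ≠ ⊤ :=
    ((measure_mono Set.inter_subset_left).trans_lt measure_ball_lt_top).ne
  have hdiff : volume (s \ t) = volume (t \ s) := by
    rw [← Set.diff_self_inter (s := s) (t := t), ← Set.diff_self_inter (s := t) (t := s),
      measure_diff Set.inter_subset_left (hs.inter ht).nullMeasurableSet hfin,
      measure_diff Set.inter_subset_left ((ht.inter hs).nullMeasurableSet)
        (by rwa [Set.inter_comm]), hvol, Set.inter_comm]
  have hkey : ∫⁻ y in s \ t, g y ≤ ∫⁻ y in t \ s, g y := by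
    calc ∫⁻ y in s \ t, g y ≤ ∫⁻ _ in s \ t, ENNReal.ofReal (R ^ (-β)) := by
          apply setLIntegral_mono' (hs.diff ht)
          intro y hy
          have hyR : R ≤ ‖y‖ := by
            have := hy.2
            simpa [t, mem_ball, dist_zero_right, not_lt] using this
          exact ENNReal.ofReal_le_ofReal
            (Real.rpow_le_rpow_of_nonpos hR hyR (neg_nonpos.2 hβ.le))
      _ = ENNReal.ofReal (R ^ (-β)) * volume (s \ t) := setLIntegral_const _ _
      _ = ENNReal.ofReal (R ^ (-β)) * volume (t \ s) := by rw [hdiff]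
      _ = ∫⁻ _ in t \ s, ENNReal.ofReal (R ^ (-β)) := (setLIntegral_const _ _).symm
      _ ≤ ∫⁻ y in t \ s, g y := by
          apply setLIntegral_mono_ae' (ht.diff hs)
          have h0 : ∀ᵐ y : EuclideanSpace ℝ (Fin d) ∂volume, y ≠ (0 : EuclideanSpace ℝ (Fin d)) := by
            rw [ae_iff]
            simpa using measure_singleton (0 : EuclideanSpace ℝ (Fin d))
          filter_upwards [h0] with y hy0 hyts
          have hy : 0 < ‖y‖ := norm_pos_iff.2 hy0
          have hyR : ‖y‖ ≤ R := by
            have := hyts.1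
            simp only [t, mem_ball, dist_zero_right] at this
            exact this.le
          exact ENNReal.ofReal_le_ofReal
            (Real.rpow_le_rpow_of_nonpos hy hyR (neg_nonpos.2 hβ.le))
  have hsdecomp : ∫⁻ y in s, g y = (∫⁻ y in s ∩ t, g y) + ∫⁻ y in s \ t, g y := by
    rw [← lintegral_union (hs.diff ht) (Set.disjoint_left.2 fun x hx1 hx2 => hx2.2 hx1.2),
      Set.inter_union_diff]
  have htdecomp : ∫⁻ y in t, g y = (∫⁻ y in s ∩ t, g y) + ∫⁻ y in t \ s, g y := by
    rw [← lintegral_union (ht.diff hs) (Set.disjoint_left.2 fun x hx1 hx2 => hx2.2 hx1.1),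
      Set.inter_comm, Set.inter_union_diff]
  show (∫⁻ y in s, g y) ≤ ∫⁻ y in t, g y
  rw [hsdecomp, htdecomp]
  exact add_le_add_right hkey _

end Comp

/-- the Morrey norm of `f(x) = |x|^{-d/q}` is finite and equals
`(C_d/d)^{1/q}(1-p/q)^{-1/p}`, where `C_d/d = |B(0,1)|`. -/
theorem morreyNorm_powerFunction (d : ℕ) (p q : ℝ) (hp : 1 ≤ p) (hpq : p < q)
    (hd : 1 ≤ d) :
    morreyNorm d p q (fun x => ‖x‖ ^ (-(d : ℝ) / q)) =
      (volume (ball (0 : EuclideanSpace ℝ (Fin d)) 1)) ^ (1 / q) *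
        ENNReal.ofReal ((1 - p / q) ^ (-(1 : ℝ) / p)) ∧
    morreyNorm d p q (fun x => ‖x‖ ^ (-(d : ℝ) / q)) ≠ ⊤ := by
  set E := EuclideanSpace ℝ (Fin d)
  haveI : Nontrivial E :=
    Module.nontrivial_of_finrank_pos (R := ℝ)
      (by rw [finrank_euclideanSpace_fin]; exact hd)
  have hfr : Module.finrank ℝ E = d := finrank_euclideanSpace_fin
  have hp0 : (0 : ℝ) < p := lt_of_lt_of_le one_pos hp
  have hq0 : (0 : ℝ) < q := lt_trans hp0 hpq
  have hD0 : (0 : ℝ) < d := by exact_mod_cast Nat.lt_of_lt_of_le Nat.zero_lt_one hd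
  set α : ℝ := (d : ℝ) * p / q with hα_def
  have hα : 0 < α := by positivity
  have hαd : α < d := by
    rw [hα_def]
    rw [div_lt_iff₀ hq0]
    nlinarith
  set V : ℝ≥0∞ := volume (ball (0 : E) 1) with hV_def
  have hV0 : V ≠ 0 := (measure_ball_pos volume 0 one_pos).ne'
  have hVt : V ≠ ⊤ := measure_ball_lt_top.ne
  set M : ℝ≥0∞ := V ^ (1 / q) * ENNReal.ofReal ((1 - p / q) ^ (-(1 : ℝ) / p)) with hM_def
  -- rewrite the integrand
  have hint : ∀ y : E, ENNReal.ofReal (|‖y‖ ^ (-(d : ℝ) / q)| ^ p) =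
      ENNReal.ofReal (‖y‖ ^ (-α)) := by
    intro y
    rw [abs_of_nonneg (Real.rpow_nonneg (norm_nonneg y) _),
      ← Real.rpow_mul (norm_nonneg y)]
    congr 2
    rw [hα_def]; ring
  have hrw : morreyNorm d p q (fun x => ‖x‖ ^ (-(d : ℝ) / q)) =
      ⨆ (a : E) (R : ℝ) (_ : 0 < R),
        volume (ball a R) ^ (1 / q - 1 / p) *
          (∫⁻ y in ball a R, ENNReal.ofReal (‖y‖ ^ (-α))) ^ (1 / p) := by
    simp only [morreyNorm]
    refine iSup_congr fun a => iSup_congr fun R => iSup_congr fun _ => ?_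
    congr 1
    congr 1
    exact lintegral_congr fun y => hint y
  -- value at center 0
  have Teq : ∀ R : ℝ, 0 < R →
      volume (ball (0 : E) R) ^ (1 / q - 1 / p) *
          (∫⁻ y in ball (0 : E) R, ENNReal.ofReal (‖y‖ ^ (-α))) ^ (1 / p) = M := by
    intro R hR
    rw [lintegral_ball_rpow d hd hα hαd hR,
      Measure.addHaar_ball volume (0 : E) hR.le, hfr]
    have hs1 : 1 < (d : ℝ) / α := (one_lt_div hα).2 hαd
    have hc : 0 < R ^ ((d : ℝ) - α) * (((d : ℝ) / α) / ((d : ℝ) / α - 1)) := by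
      have h1 : (0:ℝ) < (d : ℝ) / α := by positivity
      have h2 : (0:ℝ) < (d : ℝ) / α - 1 := by linarith
      positivity
    have hRd : (0 : ℝ) < R ^ d := by positivity
    rw [ENNReal.mul_rpow_of_ne_top ENNReal.ofReal_ne_top hVt,
      ENNReal.mul_rpow_of_ne_top hVt ENNReal.ofReal_ne_top]
    rw [show ∀ x1 x2 x3 x4 : ℝ≥0∞, x1 * x2 * (x3 * x4) = x2 * x3 * (x1 * x4) from
      fun _ _ _ _ => by ring]
    have hVcomb : V ^ (1 / q - 1 / p) * V ^ (1 / p) = V ^ (1 / q) := by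
      rw [← ENNReal.rpow_add _ _ hV0 hVt]
      ring_nf
    rw [hVcomb]
    rw [hM_def]
    congr 1
    rw [ENNReal.ofReal_rpow_of_pos hRd, ENNReal.ofReal_rpow_of_pos hc,
      ← ENNReal.ofReal_mul (by positivity)]
    congr 1
    -- real computation
    have hqp : q - p ≠ 0 := sub_ne_zero.2 hpq.ne'
    have h1pq : (0:ℝ) < 1 - p / q := by
      rw [sub_pos, div_lt_one hq0]; exact hpq
    have hs0 : (0:ℝ) < (d : ℝ) / α := by positivity
    have hs2 : (0:ℝ) < (d : ℝ) / α - 1 := by linarith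
    have hL : (d : ℝ) / α = q / p := by
      rw [hα_def, div_div_eq_mul_div, mul_div_mul_left q p (ne_of_gt hD0)]
    have hKey : ((d : ℝ) / α) / ((d : ℝ) / α - 1) = (1 - p / q)⁻¹ := by
      rw [hL, show (1:ℝ) - p/q = (q-p)/q by field_simp, inv_div,
        show q/p - 1 = (q-p)/p by field_simp, div_div_eq_mul_div,
        div_mul_cancel₀ q hp0.ne']
    rw [← Real.rpow_natCast R d, ← Real.rpow_mul hR.le,
      Real.mul_rpow (by positivity) (div_pos hs0 hs2).le,
      ← Real.rpow_mul hR.le, ← mul_assoc, ← Real.rpow_add hR]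
    have hexp : (d : ℝ) * (1 / q - 1 / p) + ((d : ℝ) - α) * (1 / p) = 0 := by
      rw [hα_def]
      field_simp
      ring
    rw [hexp, Real.rpow_zero, one_mul, hKey,
      ← Real.rpow_neg_one (1 - p/q), ← Real.rpow_mul h1pq.le]
    congr 1
    ring
  -- comparison
  have Tle : ∀ (a : E) (R : ℝ), 0 < R →
      volume (ball a R) ^ (1 / q - 1 / p) *
          (∫⁻ y in ball a R, ENNReal.ofReal (‖y‖ ^ (-α))) ^ (1 / p) ≤ M := by
    intro a R hR
    rw [← Teq R hR]
    have h1 : volume (ball a R) = volume (ball (0 : E) R) :=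
      Measure.addHaar_ball_center volume a R
    rw [h1]
    exact mul_le_mul_right (ENNReal.rpow_le_rpow (lintegral_ball_le d hd hα hR a)
      (by positivity)) _
  have hmain : morreyNorm d p q (fun x => ‖x‖ ^ (-(d : ℝ) / q)) = M := by
    rw [hrw]
    apply le_antisymm
    · exact iSup_le fun a => iSup_le fun R => iSup_le fun hR => Tle a R hR
    · calc M = volume (ball (0 : E) 1) ^ (1 / q - 1 / p) *
            (∫⁻ y in ball (0 : E) 1, ENNReal.ofReal (‖y‖ ^ (-α))) ^ (1 / p) :=
          (Teq 1 one_pos).symm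
        _ ≤ _ := by
          refine le_iSup_of_le (0 : E) ?_
          refine le_iSup_of_le (1 : ℝ) ?_
          exact le_iSup_of_le one_pos le_rfl
  refine ⟨hmain, ?_⟩
  rw [hmain, hM_def]
  exact ENNReal.mul_ne_top (ENNReal.rpow_ne_top_of_nonneg (by positivity) hVt)
    ENNReal.ofReal_ne_top
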